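/- Let n ≥ 6 with n ≡ 0 (mod 3). If d ≥ 1 + 2n·(ln 2 + ln(n/3)/3)/ln(9/8), then p_d(n)² > p_d(n-1)·p_d(n+1); that is, p_d is log-concave at n. -/

import Mathlib

open PowerSeries Finset

/-- `p : ℕ → ℚ` is the coefficient sequence of `∏_{n≥1} (1-q^n)^{-n^(d-1)}`. -/
def IsPdSeries (d : ℕ) (p : ℕ → ℚ) : Prop :=
  ∀ N k : ℕ, k ≤ N →
    (PowerSeries.coeff k) ((PowerSeries.mk p) *
      ∏ n ∈ Finset.Icc 1 N, (1 - (PowerSeries.X : PowerSeries ℚ) ^ n) ^ (n ^ (d - 1))) =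
    if k = 0 then 1 else 0

namespace PdAux


/-- coefficient function of `((1-X^j)^M)⁻¹` -/
def c (M j t : ℕ) : ℚ := if j ∣ t then (Nat.choose (M + t / j - 1) (t / j) : ℚ) else 0

lemma c_nonneg (M j t : ℕ) : 0 ≤ c M j t := by
  unfold c; split <;> positivity

lemma c_zero (M j : ℕ) : c M j 0 = 1 := by
  simp [c]

noncomputable def F (M j : ℕ) : PowerSeries ℚ := PowerSeries.mk (c M j)

lemma c_succ_sub (M j t : ℕ) (hj : j ≠ 0) :
    c (M+1) j t - (if j ≤ t then c (M+1) j (t - j) else 0) = c M j t := by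
  rcases lt_or_ge t j with h | h
  · rw [if_neg (not_le.mpr h)]
    rcases Nat.eq_zero_or_pos t with rfl | ht
    · simp [c_zero]
    · have hnd : ¬ j ∣ t := fun hd => absurd (Nat.le_of_dvd ht hd) (not_le.mpr h)
      simp [c, hnd]
  · rw [if_pos h]
    by_cases hdvd : j ∣ t
    · have hdvd' : j ∣ t - j := Nat.dvd_sub hdvd dvd_rfl
      obtain ⟨a, rfl⟩ := hdvd
      have hjpos : 0 < j := Nat.pos_of_ne_zero hj
      have ha : 1 ≤ a := by
        by_contra h0
        push_neg at h0
        interval_cases a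
        simp at h
        omega
      obtain ⟨b, rfl⟩ := Nat.exists_eq_add_of_le ha
      have h1 : j * (1 + b) / j = 1 + b := Nat.mul_div_cancel_left _ hjpos
      have h2 : j * (1 + b) - j = j * b := by ring_nf; omega
      have h3 : j * b / j = b := Nat.mul_div_cancel_left _ hjpos
      have hd2 : j ∣ j * b := Dvd.intro b rfl
      simp only [c, if_pos (Dvd.intro (1+b) rfl), h2, if_pos hd2, h1, h3]
      have e1 : M + 1 + (1 + b) - 1 = M + 1 + b := by omega
      have e2 : M + 1 + b - 1 = M + b := by omega
      have e3 : M + (1 + b) - 1 = M + b := by omega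
      rw [e1, e2, e3]
      have key : Nat.choose (M + 1 + b) (1 + b) = Nat.choose (M + b) b + Nat.choose (M + b) (1 + b) := by
        rw [show M + 1 + b = (M + b) + 1 from by omega, show 1 + b = b + 1 from by omega]
        exact Nat.choose_succ_succ (M + b) b
      push_cast [key]
      ring
    · have hnd' : ¬ j ∣ t - j := by
        intro hd
        have h2 : j ∣ t := by
          have h3 := Nat.dvd_add hd (dvd_refl j)
          rwa [Nat.sub_add_cancel h] at h3
        exact hdvd h2
      simp [c, hdvd, hnd']

lemma F_mul_pow (j : ℕ) (hj : j ≠ 0) : ∀ M, F M j * (1 - X ^ j) ^ M = 1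
  | 0 => by
    rw [pow_zero, mul_one]
    ext t
    rcases Nat.eq_zero_or_pos t with rfl | ht
    · simp [F, c_zero]
    · rw [F, coeff_mk, coeff_one, if_neg (Nat.pos_iff_ne_zero.mp ht)]
      unfold c
      split
      · rename_i hdvd
        have h1 : 1 ≤ t / j := Nat.div_pos (Nat.le_of_dvd ht hdvd) (Nat.pos_of_ne_zero hj)
        rw [Nat.choose_eq_zero_of_lt (by omega)]
        norm_num
      · rfl
  | (M+1) => by
    have h1 : F (M+1) j * (1 - X ^ j) = F M j := by
      ext t
      rw [mul_sub, mul_one, map_sub, coeff_mul_X_pow', F, F, coeff_mk, coeff_mk, coeff_mk]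
      exact c_succ_sub M j t hj
    rw [pow_succ', ← mul_assoc, h1, F_mul_pow j hj M]

lemma p_formula (q : ℕ) (p : ℕ → ℚ) (N : ℕ)
    (hp : ∀ k : ℕ, k ≤ N →
      (PowerSeries.coeff k) ((PowerSeries.mk p) *
        ∏ j ∈ Finset.Icc 1 N, (1 - (PowerSeries.X : PowerSeries ℚ) ^ j) ^ (j ^ q)) =
      if k = 0 then 1 else 0)
    {k : ℕ} (hk : k ≤ N) :
    p k = ∑ ℓ ∈ finsuppAntidiag (Icc 1 N) k, ∏ j ∈ Icc 1 N, c (j ^ q) j (ℓ j) := by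
  set G : PowerSeries ℚ := ∏ j ∈ Icc 1 N, (1 - X ^ j) ^ (j ^ q) with hG
  set FF : PowerSeries ℚ := ∏ j ∈ Icc 1 N, F (j ^ q) j with hFF
  have hFFG : FF * G = 1 := by
    rw [hFF, hG, ← Finset.prod_mul_distrib]
    apply Finset.prod_eq_one
    intro j hj
    have hj0 : j ≠ 0 := by
      have := (Finset.mem_Icc.mp hj).1; omega
    exact F_mul_pow j hj0 (j ^ q)
  have hG0 : (coeff 0) G = 1 := by
    rw [coeff_zero_eq_constantCoeff, hG, map_prod]
    apply Finset.prod_eq_one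
    intro j hj
    have hj0 : j ≠ 0 := by have := (Finset.mem_Icc.mp hj).1; omega
    rw [map_pow, map_sub, map_one, map_pow, constantCoeff_X, zero_pow hj0, sub_zero, one_pow]
  have main : ∀ k, k ≤ N → (coeff k) (PowerSeries.mk p) = coeff k FF := by
    intro k
    induction k using Nat.strong_induction_on with
    | _ k ih =>
      intro hkN
      have h1 : (coeff k) (PowerSeries.mk p * G) = (coeff k) (FF * G) := by
        rw [hp k hkN, hFFG, coeff_one]
      rw [coeff_mul, coeff_mul] at h1
      have hmem : ((k, 0) : ℕ × ℕ) ∈ Finset.HasAntidiagonal.antidiagonal k := by simp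
      rw [← Finset.add_sum_erase _ _ hmem, ← Finset.add_sum_erase _ _ hmem] at h1
      have h2 : ∑ x ∈ (Finset.HasAntidiagonal.antidiagonal k).erase (k,0),
            (coeff x.1) (PowerSeries.mk p) * (coeff x.2) G
          = ∑ x ∈ (Finset.HasAntidiagonal.antidiagonal k).erase (k,0), (coeff x.1) FF * (coeff x.2) G := by
        apply Finset.sum_congr rfl
        intro x hx
        have hx1 := Finset.mem_erase.mp hx
        have hxa := Finset.HasAntidiagonal.mem_antidiagonal.mp hx1.2
        have hlt : x.1 < k := by
          rcases Nat.lt_or_ge x.1 k with h | h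
          · exact h
          · exfalso; apply hx1.1
            have e1 : x.1 = k := by omega
            have e2 : x.2 = 0 := by omega
            exact Prod.ext e1 e2
        rw [ih x.1 hlt (by omega)]
      rw [h2] at h1
      have h3 := add_right_cancel h1
      simpa [hG0] using h3
  rw [show p k = (coeff k) (PowerSeries.mk p) from (coeff_mk k p).symm, main k hk, hFF,
    coeff_prod]
  apply Finset.sum_congr rfl
  intro ℓ _
  apply Finset.prod_congr rfl
  intro j _
  rw [F, coeff_mk]



def R : ℕ → ℕ
  | 0 => 1
  | 1 => 1
  | 2 => 2
  | 3 => 3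
  | 4 => 4
  | (m+5) => 3 * R (m+2)

lemma R_eq (m : ℕ) (h : 5 ≤ m) : R m = 3 * R (m - 3) := by
  obtain ⟨k, rfl⟩ : ∃ k, m = k + 5 := ⟨m - 5, by omega⟩
  show R (k+5) = 3 * R (k + 5 - 3)
  have e : k + 5 - 3 = k + 2 := by omega
  rw [e]
  rfl

lemma R_pos : ∀ m, 0 < R m := by
  intro m
  induction m using Nat.strong_induction_on with
  | _ m ih =>
    match m, ih with
    | 0, _ => decide
    | 1, _ => decide
    | 2, _ => decide
    | 3, _ => decide
    | 4, _ => decide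
    | (k+5), ih => 
      show 0 < 3 * R (k+2)
      have := ih (k+2) (by omega)
      positivity

lemma KR : ∀ m, ∀ j, 1 ≤ j → j ≤ m → j * R (m - j) ≤ R m := by
  intro m
  induction m using Nat.strong_induction_on with
  | _ m ih =>
    intro j hj1 hjm
    by_cases hm : m < 9
    · interval_cases m <;> interval_cases j <;> simp [R]
    · push_neg at hm
      have h2 : R m = 3 * R (m - 3) := R_eq m (by omega)
      rcases le_or_gt j 4 with hj4 | hj4
      · have h1 : R (m - j) = 3 * R (m - j - 3) := R_eq _ (by omega)
        have h3 := ih (m - 3) (by omega) j hj1 (by omega)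
        have e : m - 3 - j = m - j - 3 := by omega
        rw [e] at h3
        calc j * R (m - j) = 3 * (j * R (m - j - 3)) := by rw [h1]; ring
        _ ≤ 3 * R (m - 3) := Nat.mul_le_mul_left 3 h3
        _ = R m := h2.symm
      · have h3 := ih (m - 3) (by omega) (j - 3) (by omega) (by omega)
        have e : m - 3 - (j - 3) = m - j := by omega
        rw [e] at h3
        have hj3 : j ≤ 3 * (j - 3) := by omega
        calc j * R (m - j) ≤ (3 * (j - 3)) * R (m - j) :=
              Nat.mul_le_mul_right _ hj3
        _ = 3 * ((j - 3) * R (m - j)) := by ring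
        _ ≤ 3 * R (m - 3) := Nat.mul_le_mul_left 3 h3
        _ = R m := h2.symm

lemma R_3t2 : ∀ t, R (3*t+2) = 2 * 3^t := by
  intro t
  induction t with
  | zero => decide
  | succ t ih =>
    have : 3*(t+1)+2 = (3*t+2) + 3 := by ring
    rw [this, show (3*t+2)+3 = ((3*t+2)+3) from rfl]
    rw [R_eq ((3*t+2)+3) (by omega), Nat.add_sub_cancel, ih]
    ring

lemma R_3t4 : ∀ t, R (3*t+4) = 4 * 3^t := by
  intro t
  induction t with
  | zero => decide
  | succ t ih =>
    have e : 3*(t+1)+4 = (3*t+4) + 3 := by ring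
    rw [e, R_eq ((3*t+4)+3) (by omega), Nat.add_sub_cancel, ih]
    ring

lemma nat_key (M b : ℕ) (hM : 1 ≤ M) :
    Nat.choose (M + b) (b+1) ≤ M * Nat.choose (M + b - 1) b := by
  have h1 : (M + b) * Nat.choose (M + b - 1) b = Nat.choose (M + b) (b + 1) * (b + 1) := by
    have h := Nat.add_one_mul_choose_eq (M + b - 1) b
    rw [show M + b - 1 + 1 = M + b from by omega] at h
    exact h
  have h2 : M + b ≤ M * (b + 1) := by
    have h3 : b ≤ M * b := Nat.le_mul_of_pos_left b hM
    have e : M * (b+1) = M * b + M := by ring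
    omega
  apply Nat.le_of_mul_le_mul_right _ (Nat.succ_pos b)
  calc Nat.choose (M + b) (b+1) * (b+1) = (M + b) * Nat.choose (M + b - 1) b := h1.symm
  _ ≤ (M * (b+1)) * Nat.choose (M + b - 1) b := Nat.mul_le_mul_right _ h2
  _ = M * Nat.choose (M + b - 1) b * (b+1) := by ring

lemma c_step (M j t : ℕ) (hM : 1 ≤ M) (hj : j ≠ 0) (hdvd : j ∣ t) (hjt : j ≤ t) :
    c M j t ≤ (M : ℚ) * c M j (t - j) := by
  have hjpos : 0 < j := Nat.pos_of_ne_zero hj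
  obtain ⟨a, rfl⟩ := hdvd
  have ha : 1 ≤ a := by
    by_contra h0
    push_neg at h0
    interval_cases a
    omega
  obtain ⟨b, rfl⟩ := Nat.exists_eq_add_of_le ha
  have h2 : j * (1 + b) - j = j * b := by ring_nf; omega
  rw [h2]
  have h1 : j * (1 + b) / j = 1 + b := Nat.mul_div_cancel_left _ hjpos
  have h3 : j * b / j = b := Nat.mul_div_cancel_left _ hjpos
  simp only [c, if_pos (dvd_mul_right j (1+b)), if_pos (dvd_mul_right j b), h1, h3]
  have e1 : M + (1 + b) - 1 = M + b := by omega
  have e2 : 1 + b = b + 1 := by omega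
  rw [e1, e2]
  exact_mod_cast nat_key M b hM

noncomputable def T (q N : ℕ) (ℓ : ℕ →₀ ℕ) : ℚ := ∏ j ∈ Icc 1 N, c (j ^ q) j (ℓ j)

noncomputable def S (q N m : ℕ) : ℚ := ∑ ℓ ∈ finsuppAntidiag (Icc 1 N) m, T q N ℓ

lemma T_nonneg (q N : ℕ) (ℓ : ℕ →₀ ℕ) : 0 ≤ T q N ℓ :=
  Finset.prod_nonneg fun j _ => c_nonneg _ _ _

lemma S_nonneg (q N m : ℕ) : 0 ≤ S q N m :=
  Finset.sum_nonneg fun ℓ _ => T_nonneg q N ℓ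

lemma T_zero (q N : ℕ) : T q N 0 = 1 := by
  rw [T]
  apply Finset.prod_eq_one
  intro j _
  simpa using c_zero (j ^ q) j

lemma S_zero (q N : ℕ) : S q N 0 = 1 := by
  rw [S, finsuppAntidiag_zero, Finset.sum_singleton, T_zero]

def gmax (ℓ : ℕ →₀ ℕ) : ℕ := WithBot.unbotD 0 (ℓ.support.max)

lemma gmax_mem {ℓ : ℕ →₀ ℕ} (h : ℓ.support.Nonempty) : gmax ℓ ∈ ℓ.support := by
  obtain ⟨a, ha⟩ := Finset.max_of_nonempty h
  rw [gmax, ha]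
  exact Finset.mem_of_max ha

lemma geo : ∀ k : ℕ, ∑ j ∈ Icc 1 k, (2:ℚ)^(k - j) = 2^k - 1 := by
  intro k
  induction k with
  | zero => simp
  | succ k ih =>
    rw [Finset.sum_Icc_succ_top (by omega : 1 ≤ k+1)]
    have e : ∀ j ∈ Icc 1 k, (2:ℚ)^(k+1-j) = 2 * 2^(k-j) := by
      intro j hj
      have := (mem_Icc.mp hj).2
      rw [show k+1-j = (k-j)+1 from by omega, pow_succ]
      ring
    rw [Finset.sum_congr rfl e, ← Finset.mul_sum, ih]
    simp only [Nat.sub_self, pow_zero, pow_succ]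
    ring

lemma S_le (q N : ℕ) : ∀ m, 1 ≤ m → S q N m ≤ 2^(m-1) * ((R m : ℚ))^q := by
  intro m
  induction m using Nat.strong_induction_on with
  | _ m ih =>
    intro hm1
    have hmapsto : ∀ ℓ ∈ finsuppAntidiag (Icc 1 N) m, gmax ℓ ∈ Icc 1 N := by
      intro ℓ hℓ
      rw [mem_finsuppAntidiag] at hℓ
      have hne : ℓ.support.Nonempty := by
        by_contra hemp
        rw [Finset.not_nonempty_iff_eq_empty, Finsupp.support_eq_empty] at hemp
        subst hemp
        simp at hℓ
        omega
      exact hℓ.2 (gmax_mem hne)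
    rw [S, ← Finset.sum_fiberwise_of_maps_to hmapsto]
    have fiber_le : ∀ j ∈ Icc 1 N,
        ∑ ℓ ∈ (finsuppAntidiag (Icc 1 N) m).filter (fun ℓ => gmax ℓ = j), T q N ℓ
          ≤ (R m : ℚ)^q * (if j < m then 2^(m-1-j) else if j = m then 1 else 0) := by
      intro j hj
      obtain ⟨hj1, hjN⟩ := mem_Icc.mp hj
      set A := finsuppAntidiag (Icc 1 N) m with hA'
      set B := A.filter (fun ℓ => gmax ℓ = j ∧ j ∣ ℓ j) with hB
      have hsub : B ⊆ A.filter (fun ℓ => gmax ℓ = j) := by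
        intro ℓ hℓ
        rw [hB, Finset.mem_filter] at hℓ
        exact Finset.mem_filter.mpr ⟨hℓ.1, hℓ.2.1⟩
      have hzero : ∀ ℓ ∈ A.filter (fun ℓ => gmax ℓ = j), ℓ ∉ B → T q N ℓ = 0 := by
        intro ℓ hℓ hnB
        rw [Finset.mem_filter] at hℓ
        have hnd : ¬ j ∣ ℓ j := by
          intro hdvd
          exact hnB (by rw [hB, Finset.mem_filter]; exact ⟨hℓ.1, hℓ.2, hdvd⟩)
        rw [T]
        apply Finset.prod_eq_zero hj
        rw [c, if_neg hnd]
      rw [← Finset.sum_subset hsub hzero]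
      have hBfacts : ∀ ℓ ∈ B, j ≤ ℓ j ∧ ℓ j ≤ m ∧ j ∣ ℓ j ∧ Finsupp.single j j ≤ ℓ := by
        intro ℓ hℓ
        rw [hB, Finset.mem_filter] at hℓ
        obtain ⟨hAmem, hg, hdvd⟩ := hℓ
        rw [hA', mem_finsuppAntidiag] at hAmem
        have hne : ℓ.support.Nonempty := by
          by_contra hemp
          rw [Finset.not_nonempty_iff_eq_empty, Finsupp.support_eq_empty] at hemp
          subst hemp
          simp at hAmem
          omega
        have hjs : j ∈ ℓ.support := hg ▸ gmax_mem hne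
        have hpos : 1 ≤ ℓ j := Nat.pos_of_ne_zero (Finsupp.mem_support_iff.mp hjs)
        have hjℓ : j ≤ ℓ j := Nat.le_of_dvd hpos hdvd
        have hsum : ℓ j ≤ m := by
          rw [← hAmem.1]
          exact Finset.single_le_sum (fun i _ => Nat.zero_le _) (hAmem.2 hjs)
        exact ⟨hjℓ, hsum, hdvd, Finsupp.single_le_iff.mpr hjℓ⟩
      rcases lt_or_ge m j with hjm | hjm
      · -- j > m: B is empty
        have hBempty : B = ∅ := by
          rw [Finset.eq_empty_iff_forall_notMem]
          intro ℓ hℓ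
          obtain ⟨h1, h2, _, _⟩ := hBfacts ℓ hℓ
          omega
        rw [hBempty, Finset.sum_empty, if_neg (by omega), if_neg (by omega), mul_zero]
      · -- j ≤ m
        have himg : ∀ ℓ ∈ B, ℓ - Finsupp.single j j ∈ finsuppAntidiag (Icc 1 N) (m - j) := by
          intro ℓ hℓ'
          have hℓ := hℓ'
          rw [hB, Finset.mem_filter, hA', mem_finsuppAntidiag] at hℓ
          obtain ⟨⟨hs, hsupp⟩, _⟩ := hℓ
          rw [mem_finsuppAntidiag]
          have hle : Finsupp.single j j ≤ ℓ := (hBfacts ℓ hℓ').2.2.2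
          constructor
          · have key2 : (Icc 1 N).sum ⇑(ℓ - Finsupp.single j j)
                = ∑ i ∈ Icc 1 N, (ℓ i - Finsupp.single j j i) :=
              Finset.sum_congr rfl fun i _ => Finsupp.tsub_apply ℓ _ i
            have hptwise : ∀ i ∈ Icc 1 N, Finsupp.single j j i ≤ ℓ i :=
              fun i _ => Finsupp.le_def.mp hle i
            rw [key2, Finset.sum_tsub_distrib _ hptwise]
            have hsingle : ∑ i ∈ Icc 1 N, Finsupp.single j j i = j := by
              have e : ∀ i ∈ Icc 1 N, Finsupp.single j j i = if j = i then j else 0 :=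
                fun i _ => Finsupp.single_apply
              rw [Finset.sum_congr rfl e, Finset.sum_ite_eq, if_pos hj]
            have hs' : ∑ i ∈ Icc 1 N, ℓ i = m := hs
            rw [hsingle, hs']
          · exact (Finsupp.support_tsub).trans hsupp
        have hinj : ∀ ℓ₁ ∈ B, ∀ ℓ₂ ∈ B,
            ℓ₁ - Finsupp.single j j = ℓ₂ - Finsupp.single j j → ℓ₁ = ℓ₂ := by
          intro ℓ₁ h₁ ℓ₂ h₂ heq
          have e₁ := tsub_add_cancel_of_le (hBfacts ℓ₁ h₁).2.2.2
          have e₂ := tsub_add_cancel_of_le (hBfacts ℓ₂ h₂).2.2.2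
          rw [← e₁, ← e₂, heq]
        have hTle : ∀ ℓ ∈ B, T q N ℓ ≤ ((j:ℚ)^q) * T q N (ℓ - Finsupp.single j j) := by
          intro ℓ hℓ
          obtain ⟨hjℓ, hsum, hdvd, _⟩ := hBfacts ℓ hℓ
          have hMq : 1 ≤ j ^ q := Nat.one_le_pow q j (by omega)
          have hcs := c_step (j^q) j (ℓ j) hMq (by omega) hdvd hjℓ
          have hφj : (ℓ - Finsupp.single j j) j = ℓ j - j := by
            rw [Finsupp.tsub_apply, Finsupp.single_apply, if_pos rfl]
          have hφi : ∀ i ∈ (Icc 1 N).erase j, (ℓ - Finsupp.single j j) i = ℓ i := by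
            intro i hi
            have hne' : i ≠ j := (Finset.mem_erase.mp hi).1
            rw [Finsupp.tsub_apply, Finsupp.single_apply, if_neg (Ne.symm hne'), Nat.sub_zero]
          have hP : ∏ i ∈ (Icc 1 N).erase j, c (i^q) i ((ℓ - Finsupp.single j j) i)
              = ∏ i ∈ (Icc 1 N).erase j, c (i^q) i (ℓ i) :=
            Finset.prod_congr rfl (fun i hi => by rw [hφi i hi])
          rw [T, T, ← Finset.mul_prod_erase _ _ hj, ← Finset.mul_prod_erase _ _ hj,
            hP, hφj, ← mul_assoc]
          apply mul_le_mul_of_nonneg_right _ (Finset.prod_nonneg fun i _ => c_nonneg _ _ _)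
          calc c (j^q) j (ℓ j) ≤ ((j^q : ℕ) : ℚ) * c (j^q) j (ℓ j - j) := hcs
          _ = (j:ℚ)^q * c (j^q) j (ℓ j - j) := by push_cast; ring
        calc ∑ ℓ ∈ B, T q N ℓ ≤ ∑ ℓ ∈ B, (j:ℚ)^q * T q N (ℓ - Finsupp.single j j) :=
              Finset.sum_le_sum hTle
        _ = (j:ℚ)^q * ∑ ℓ ∈ B, T q N (ℓ - Finsupp.single j j) := by rw [Finset.mul_sum]
        _ = (j:ℚ)^q * ∑ ℓ' ∈ B.image (fun ℓ => ℓ - Finsupp.single j j), T q N ℓ' := by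
              rw [Finset.sum_image hinj]
        _ ≤ (j:ℚ)^q * S q N (m - j) := by
              apply mul_le_mul_of_nonneg_left _ (by positivity)
              rw [S]
              apply Finset.sum_le_sum_of_subset_of_nonneg
              · intro ℓ' hℓ'
                obtain ⟨ℓ, hℓ, rfl⟩ := Finset.mem_image.mp hℓ'
                exact himg ℓ hℓ
              · intro ℓ' _ _
                exact T_nonneg q N ℓ'
        _ ≤ (R m : ℚ)^q * (if j < m then 2^(m-1-j) else if j = m then 1 else 0) := by
              rcases eq_or_lt_of_le hjm with rfl | hjlt
              · rw [Nat.sub_self, S_zero, mul_one, if_neg (lt_irrefl j), if_pos rfl, mul_one]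
                have hkr := KR j j (by omega) (le_refl j)
                rw [Nat.sub_self] at hkr
                have : (j : ℚ) ≤ (R j : ℚ) := by exact_mod_cast (by simpa [R] using hkr)
                exact pow_le_pow_left₀ (by positivity) this q
              · rw [if_pos hjlt]
                have hIH := ih (m - j) (by omega) (by omega)
                have hkr := KR m j hj1 hjm
                calc (j:ℚ)^q * S q N (m - j) ≤ (j:ℚ)^q * (2^(m-j-1) * (R (m-j) : ℚ)^q) := by
                      apply mul_le_mul_of_nonneg_left hIH (by positivity)
                _ = 2^(m-j-1) * ((j:ℚ) * (R (m-j):ℚ))^q := by rw [mul_pow]; ring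
                _ ≤ 2^(m-j-1) * ((R m : ℚ))^q := by
                      apply mul_le_mul_of_nonneg_left _ (by positivity)
                      apply pow_le_pow_left₀ (by positivity)
                      exact_mod_cast hkr
                _ = (R m : ℚ)^q * 2^(m-1-j) := by
                      rw [show m-1-j = m-j-1 from by omega]; ring
    calc ∑ j ∈ Icc 1 N, ∑ ℓ ∈ (finsuppAntidiag (Icc 1 N) m).filter (fun ℓ => gmax ℓ = j), T q N ℓ
        ≤ ∑ j ∈ Icc 1 N, (R m : ℚ)^q * (if j < m then 2^(m-1-j) else if j = m then 1 else 0) :=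
          Finset.sum_le_sum fiber_le
    _ = (R m : ℚ)^q * ∑ j ∈ Icc 1 N, (if j < m then (2:ℚ)^(m-1-j) else if j = m then 1 else 0) := by
          rw [Finset.mul_sum]
    _ ≤ (R m : ℚ)^q * 2^(m-1) := by
          apply mul_le_mul_of_nonneg_left _ (by positivity)
          have hnonneg : ∀ j : ℕ, 0 ≤ (if j < m then (2:ℚ)^(m-1-j) else if j = m then 1 else 0) := by
            intro j
            split
            · positivity
            · split
              · norm_num
              · exact le_refl 0
          have h1 : ∑ j ∈ Icc 1 N, (if j < m then (2:ℚ)^(m-1-j) else if j = m then 1 else 0)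
              = ∑ j ∈ (Icc 1 N).filter (· ≤ m),
                  (if j < m then (2:ℚ)^(m-1-j) else if j = m then 1 else 0) := by
            symm
            apply Finset.sum_subset (Finset.filter_subset _ _)
            intro x hx hnx
            have hxm : ¬ x ≤ m := by
              intro hxm
              exact hnx (Finset.mem_filter.mpr ⟨hx, hxm⟩)
            rw [if_neg (by omega), if_neg (by omega)]
          rw [h1]
          have h2 : ∑ j ∈ (Icc 1 N).filter (· ≤ m),
                (if j < m then (2:ℚ)^(m-1-j) else if j = m then 1 else 0)
              ≤ ∑ j ∈ Icc 1 m, (if j < m then (2:ℚ)^(m-1-j) else if j = m then 1 else 0) := by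
            apply Finset.sum_le_sum_of_subset_of_nonneg
            · intro x hx
              obtain ⟨hx1, hx2⟩ := Finset.mem_filter.mp hx
              exact mem_Icc.mpr ⟨(mem_Icc.mp hx1).1, hx2⟩
            · intro i _ _
              exact hnonneg i
          refine h2.trans ?_
          obtain ⟨k, rfl⟩ : ∃ k, m = k + 1 := ⟨m-1, by omega⟩
          simp only [Nat.add_sub_cancel]
          rw [Finset.sum_Icc_succ_top (by omega : 1 ≤ k+1)]
          have e : ∀ j ∈ Icc 1 k, (if j < k+1 then (2:ℚ)^(k-j) else if j = k+1 then 1 else 0)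
              = 2^(k-j) := by
            intro j hj
            rw [if_pos (by have := (mem_Icc.mp hj).2; omega)]
          rw [Finset.sum_congr rfl e, if_neg (lt_irrefl _), if_pos rfl, geo]
          ring_nf
          exact le_refl _
    _ = 2^(m-1) * (R m : ℚ)^q := by ring

lemma S_ge (q N n : ℕ) (h3N : 3 ≤ N) (h3 : 3 ∣ n) (hn : 1 ≤ n) :
    (Nat.choose (3^q + n/3 - 1) (n/3) : ℚ) ≤ S q N n := by
  have h3mem : (3:ℕ) ∈ Icc 1 N := mem_Icc.mpr ⟨by omega, h3N⟩
  have hmem : Finsupp.single 3 n ∈ finsuppAntidiag (Icc 1 N) n := by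
    rw [mem_finsuppAntidiag]
    constructor
    · have e : ∀ i ∈ Icc 1 N, Finsupp.single 3 n i = if 3 = i then n else 0 :=
        fun i _ => Finsupp.single_apply
      rw [Finset.sum_congr rfl e, Finset.sum_ite_eq, if_pos h3mem]
    · intro i hi
      have h4 := Finsupp.support_single_subset hi
      simp only [Finset.mem_singleton] at h4
      subst h4
      exact h3mem
  have hval : T q N (Finsupp.single 3 n) = (Nat.choose (3^q + n/3 - 1) (n/3) : ℚ) := by
    rw [T, Finset.prod_eq_single_of_mem 3 h3mem]
    · rw [show Finsupp.single 3 n 3 = n from Finsupp.single_eq_same, c, if_pos h3]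
    · intro i _ hne
      rw [show Finsupp.single 3 n i = 0 from Finsupp.single_eq_of_ne' (Ne.symm hne), c_zero]
  rw [S, ← hval]
  exact Finset.single_le_sum (fun ℓ _ => T_nonneg q N ℓ) hmem


end PdAux

open PdAux

/-- Log-concavity of `p_d` at `n ≡ 0 (mod 3)`, `n ≥ 6`, for large `d`. -/
theorem pd_log_concave_mod_zero (d : ℕ) (p : ℕ → ℚ) (hp : IsPdSeries d p)
    (n : ℕ) (hn : 6 ≤ n) (h3 : n % 3 = 0)
    (hd : (d : ℝ) ≥ 1 + 2 * (n : ℝ) * (Real.log 2 + Real.log ((n : ℝ) / 3) / 3) / Real.log (9 / 8)) :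
    p n ^ 2 > p (n - 1) * p (n + 1) := by
  have hp' := fun k hk => hp (n+1) k hk
  set q := d - 1 with hqdef
  set N := n + 1 with hN
  set s := n / 3 with hs
  have hn3 : n = 3 * s := by omega
  have hs2 : 2 ≤ s := by omega
  -- basic real facts
  have hlog98 : (0:ℝ) < Real.log (9/8) := Real.log_pos (by norm_num)
  have hncast : (n:ℝ) = 3 * (s:ℝ) := by exact_mod_cast congrArg (Nat.cast : ℕ → ℝ) hn3
  have hscast : (1:ℝ) < (s:ℝ) := by exact_mod_cast hs2.trans_lt' (by norm_num)
  have hn3cast : (n:ℝ)/3 = (s:ℝ) := by rw [hncast]; ring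
  have hlogs : (0:ℝ) < Real.log s := Real.log_pos hscast
  have hlog2 : (0:ℝ) < Real.log 2 := Real.log_pos (by norm_num)
  have hd1 : 1 ≤ d := by
    have h0 : (0:ℝ) ≤ 2 * (n : ℝ) * (Real.log 2 + Real.log ((n : ℝ) / 3) / 3) / Real.log (9 / 8) := by
      rw [hn3cast]
      positivity
    have : (1:ℝ) ≤ (d:ℝ) := by linarith
    exact_mod_cast this
  have hqd : (q:ℝ) = (d:ℝ) - 1 := by
    rw [hqdef]
    push_cast [Nat.cast_sub hd1]
    ring
  -- key real inequality
  have h6 : 2*(n:ℝ)*Real.log 2 + 2*(s:ℝ)*Real.log s ≤ (q:ℝ) * Real.log (9/8) := by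
    have h5 : 2*(n:ℝ)*(Real.log 2 + Real.log s / 3) / Real.log (9/8) ≤ (d:ℝ) - 1 := by
      rw [← hn3cast]
      linarith
    have h5' := (div_le_iff₀ hlog98).mp h5
    rw [hqd]
    nlinarith [h5', hncast]
  have hkeyR : (8:ℝ)^q * (2^(2*n) * (s:ℝ)^(2*s)) ≤ (9:ℝ)^q := by
    have hspos : (0:ℝ) < (s:ℝ) := by linarith
    have hP1 : (0:ℝ) < 8^q * (2^(2*n) * (s:ℝ)^(2*s)) := by positivity
    have hP2 : (0:ℝ) < 9^q := by positivity
    rw [← Real.log_le_log_iff hP1 hP2]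
    rw [Real.log_mul (by positivity) (by positivity), Real.log_mul (by positivity) (by positivity),
      Real.log_pow, Real.log_pow, Real.log_pow, Real.log_pow]
    have hlog9 : Real.log 9 = Real.log 8 + Real.log (9/8) := by
      rw [Real.log_div (by norm_num) (by norm_num)]
      ring
    push_cast
    nlinarith [h6, hlog9]
  have hkeyN : 8^q * (2^(2*n) * s^(2*s)) ≤ 9^q := by exact_mod_cast hkeyR
  -- choose lower bound
  set L := Nat.choose (3^q + s - 1) s with hL
  have hLfact : (3^q)^s ≤ s.factorial * L := by
    calc (3^q)^s ≤ (3^q).ascFactorial s := Nat.pow_succ_le_ascFactorial _ _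
    _ = s.factorial * L := Nat.ascFactorial_eq_factorial_mul_choose' _ _
  have hL0 : 0 < L := by
    apply Nat.choose_pos
    have : 1 ≤ 3^q := Nat.one_le_pow _ _ (by norm_num)
    omega
  -- p bounds
  have hform : ∀ k, k ≤ N → p k = S q N k := by
    intro k hk
    rw [p_formula q p N hp' hk]
    rfl
  have hub1 : p (n-1) ≤ 2^(n-2) * (R (n-1) : ℚ)^q := by
    rw [hform (n-1) (by omega)]
    have h7 := S_le q N (n-1) (by omega)
    rwa [show n-1-1 = n-2 from by omega] at h7
  have hub2 : p (n+1) ≤ 2^n * (R (n+1) : ℚ)^q := by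
    rw [hform (n+1) (le_refl N)]
    have h7 := S_le q N (n+1) (by omega)
    rwa [show n+1-1 = n from by omega] at h7
  have hnn1 : 0 ≤ p (n-1) := by rw [hform (n-1) (by omega)]; exact S_nonneg q N (n-1)
  have hnn2 : 0 ≤ p (n+1) := by rw [hform (n+1) (le_refl N)]; exact S_nonneg q N (n+1)
  have hlb : (L : ℚ) ≤ p n := by
    rw [hform n (by omega)]
    have h8 := S_ge q N n (by omega) (by omega) (by omega)
    rwa [← hs, ← hL] at h8
  have hR1 : R (n-1) = 2 * 3^(s-1) := by
    rw [show n - 1 = 3*(s-1)+2 from by omega]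
    exact R_3t2 (s-1)
  have hR2 : R (n+1) = 4 * 3^(s-1) := by
    rw [show n + 1 = 3*(s-1)+4 from by omega]
    exact R_3t4 (s-1)
  -- final numeric comparison in ℚ
  have hfac2 : ((s.factorial : ℚ))^2 ≤ ((s:ℚ)^s)^2 := by
    apply pow_le_pow_left₀ (by positivity)
    exact_mod_cast Nat.factorial_le_pow s
  have hsq : (0:ℚ) < (s:ℚ) := by exact_mod_cast (by omega : 0 < s)
  have step1 : (2:ℚ)^(2*n-2) * 8^q * ((s.factorial:ℚ))^2 < 9^q := by
    have e1 : ((s:ℚ)^s)^2 = (s:ℚ)^(2*s) := by rw [← pow_mul, mul_comm]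
    have hkeyQ : (8:ℚ)^q * (2^(2*n) * (s:ℚ)^(2*s)) ≤ 9^q := by exact_mod_cast hkeyN
    have c2 : (2:ℚ)^(2*n-2) < 2^(2*n) := by
      apply pow_lt_pow_right₀ (by norm_num)
      omega
    calc (2:ℚ)^(2*n-2) * 8^q * ((s.factorial:ℚ))^2
        ≤ (2:ℚ)^(2*n-2) * 8^q * ((s:ℚ)^s)^2 := by
          apply mul_le_mul_of_nonneg_left hfac2 (by positivity)
    _ < (2:ℚ)^(2*n) * 8^q * ((s:ℚ)^s)^2 := by
          apply mul_lt_mul_of_pos_right _ (by positivity)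
          apply mul_lt_mul_of_pos_right c2 (by positivity)
    _ = 8^q * (2^(2*n) * (s:ℚ)^(2*s)) := by rw [e1]; ring
    _ ≤ 9^q := hkeyQ
  have main : (2^(n-2) * (R (n-1):ℚ)^q) * (2^n * (R (n+1):ℚ)^q) < (L:ℚ)^2 := by
    rw [hR1, hR2]
    push_cast
    have e2 : ((2:ℚ) * 3^(s-1))^q * ((4:ℚ) * 3^(s-1))^q = 8^q * ((3:ℚ)^(s-1))^(2*q) := by
      calc ((2:ℚ) * 3^(s-1))^q * ((4:ℚ) * 3^(s-1))^q
          = (((2:ℚ) * 3^(s-1)) * ((4:ℚ) * 3^(s-1)))^q := (mul_pow _ _ _).symm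
      _ = ((8:ℚ) * ((3:ℚ)^(s-1))^2)^q := by congr 1; ring
      _ = (8:ℚ)^q * (((3:ℚ)^(s-1))^2)^q := mul_pow _ _ _
      _ = 8^q * ((3:ℚ)^(s-1))^(2*q) := by rw [← pow_mul]
    have e3 : (2:ℚ)^(n-2) * 2^n = 2^(2*n-2) := by
      rw [← pow_add]
      congr 1
      omega
    have hLQ : (3:ℚ)^(q*s) ≤ (s.factorial:ℚ) * (L:ℚ) := by
      have := hLfact
      have h9 : (((3^q)^s : ℕ) : ℚ) ≤ ((s.factorial * L : ℕ) : ℚ) := by exact_mod_cast this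
      rw [← pow_mul] at h9
      push_cast at h9
      exact h9
    -- suffices via multiplying by (s!)^2
    have hfacpos : (0:ℚ) < ((s.factorial:ℚ))^2 := by positivity
    rw [← mul_lt_mul_iff_left₀ hfacpos]
    have hsplit : (s-1) * (2*q) + 2*q = q*s + q*s := by
      have h1 : s - 1 + 1 = s := by omega
      calc (s-1)*(2*q) + 2*q = ((s-1)+1)*(2*q) := by ring
      _ = s*(2*q) := by rw [h1]
      _ = q*s + q*s := by ring
    have e4 : (3:ℚ)^(q*s) * (3:ℚ)^(q*s) = ((3:ℚ)^(s-1))^(2*q) * 9^q := by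
      rw [show (9:ℚ) = 3^2 from by norm_num, ← pow_mul, ← pow_mul, ← pow_add, ← pow_add]
      congr 1
      exact hsplit.symm
    calc (2:ℚ)^(n-2) * (2 * 3^(s-1):ℚ)^q * ((2:ℚ)^n * ((4:ℚ) * 3^(s-1))^q) * ((s.factorial:ℚ))^2
        = ((2:ℚ)^(n-2) * 2^n) * (((2:ℚ) * 3^(s-1))^q * ((4:ℚ) * 3^(s-1))^q)
            * ((s.factorial:ℚ))^2 := by ring
    _ = (2:ℚ)^(2*n-2) * ((8:ℚ)^q * ((3:ℚ)^(s-1))^(2*q)) * ((s.factorial:ℚ))^2 := by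
          rw [e3, e2]
    _ = ((3:ℚ)^(s-1))^(2*q) * ((2:ℚ)^(2*n-2) * 8^q * ((s.factorial:ℚ))^2) := by ring
    _ < ((3:ℚ)^(s-1))^(2*q) * 9^q := by
          apply mul_lt_mul_of_pos_left step1 (by positivity)
    _ = (3:ℚ)^(q*s) * (3:ℚ)^(q*s) := e4.symm
    _ ≤ ((s.factorial:ℚ) * (L:ℚ)) * ((s.factorial:ℚ) * (L:ℚ)) := by
          apply mul_le_mul hLQ hLQ (by positivity) (by positivity)
    _ = (L:ℚ)^2 * ((s.factorial:ℚ))^2 := by ring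
  have final : p (n-1) * p (n+1) < p n ^ 2 := by
    calc p (n-1) * p (n+1) ≤ (2^(n-2) * (R (n-1):ℚ)^q) * (2^n * (R (n+1):ℚ)^q) := by
          apply mul_le_mul hub1 hub2 hnn2 (by positivity)
    _ < (L:ℚ)^2 := main
    _ ≤ p n ^ 2 := by
          apply pow_le_pow_left₀ (by positivity) hlb
  exact final
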